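/- In a pointed finitely complete category, every strongly unital object is a unital object. -/

import Mathlib

open CategoryTheory CategoryTheory.Limits

universe v u

variable {C : Type u} [Category.{v} C]

/-- A cospan `(r, s)` is jointly strongly epimorphic: whenever both `r` and `s`
factor through a monomorphism `m`, the monomorphism `m` is an isomorphism. -/
def JointlyStronglyEpi {X Y A : C} (r : X ⟶ A) (s : Y ⟶ A) : Prop :=
  ∀ ⦃M : C⦄ (m : M ⟶ A), Mono m →
    (∃ r' : X ⟶ M, r' ≫ m = r) → (∃ s' : Y ⟶ M, s' ≫ m = s) → IsIso m

/-- A point `(f, s)` over `B` is strong: for every `g : X ⟶ B`, the second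
projection of the pullback of `f` along `g` together with `s` is a jointly
strongly epimorphic pair. -/
def IsStrongPoint [HasPullbacks C] {A B : C} (f : A ⟶ B) (s : B ⟶ A) : Prop :=
  ∀ ⦃X : C⦄ (g : X ⟶ B), JointlyStronglyEpi (pullback.snd g f) s

/-- A point `(f, s)` over `B` is stably strong: every pullback of it along a
morphism `g : X ⟶ B` is a strong point. -/
def IsStablyStrongPoint [HasPullbacks C] {A B : C} (f : A ⟶ B) (s : B ⟶ A)
    (hs : s ≫ f = 𝟙 B) : Prop :=
  ∀ ⦃X : C⦄ (g : X ⟶ B),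
    IsStrongPoint (pullback.fst g f)
      (pullback.lift (𝟙 X) (g ≫ s) (by simp [hs]))

/-- An object `Y` is a Mal'tsev object: for every pullback of split
epimorphisms over `Y`, the two induced sections are jointly strongly
epimorphic. -/
def IsMaltsevObject [HasPullbacks C] (Y : C) : Prop :=
  ∀ ⦃A X : C⦄ (f : A ⟶ Y) (s : Y ⟶ A) (g : X ⟶ Y) (t : Y ⟶ X)
    (hs : s ≫ f = 𝟙 Y) (ht : t ≫ g = 𝟙 Y),
    JointlyStronglyEpi
      (pullback.lift (𝟙 A) (f ≫ t) (by simp [ht]) : A ⟶ pullback f g)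
      (pullback.lift (g ≫ s) (𝟙 X) (by simp [hs]) : X ⟶ pullback f g)

/-- An object `Y` is protomodular: every point over `Y` is stably strong. -/
def IsProtomodularObject [HasPullbacks C] (Y : C) : Prop :=
  ∀ ⦃A : C⦄ (f : A ⟶ Y) (s : Y ⟶ A) (hs : s ≫ f = 𝟙 Y), IsStablyStrongPoint f s hs

/-- `f` is a regular epimorphism. -/
def IsRegularEpi {X Y : C} (f : X ⟶ Y) : Prop := Nonempty (RegularEpi f)

/-- A commutative square `f' ≫ β = α ≫ f` of regular epimorphisms is a regular
pushout if the comparison morphism into the pullback of `β` and `f` is a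
regular epimorphism. -/
def IsRegularPushout [HasPullbacks C] {A' A B' B : C}
    (α : A' ⟶ A) (f' : A' ⟶ B') (f : A ⟶ B) (β : B' ⟶ B)
    (w : f' ≫ β = α ≫ f) : Prop :=
  _root_.IsRegularEpi α ∧ _root_.IsRegularEpi β ∧ _root_.IsRegularEpi f' ∧ _root_.IsRegularEpi f ∧
    _root_.IsRegularEpi (pullback.lift f' α w)

/-- `Y` is a strongly unital object. -/
def StronglyUnitalObject [HasPullbacks C] [HasBinaryProducts C] (Y : C) : Prop :=
  IsStablyStrongPoint (prod.fst : Y ⨯ Y ⟶ Y) (prod.lift (𝟙 Y) (𝟙 Y)) (by first | simp | exact prod.lift_fst _ _ | exact limit.lift_π _ _)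

/-- `Y` is a unital object. -/
def UnitalObject [HasPullbacks C] [HasBinaryProducts C] [HasZeroMorphisms C]
    (Y : C) : Prop :=
  IsStablyStrongPoint (prod.fst : Y ⨯ Y ⟶ Y) (prod.lift (𝟙 Y) 0) (by first | simp | exact prod.lift_fst _ _ | exact limit.lift_π _ _)

/-- `Y` is a subtractive object: for every split right punctual span
`(s, f, g, t)` over `Y`, the composite `ker(g) ≫ f` is a regular epimorphism. -/
def SubtractiveObject [HasZeroMorphisms C] [HasKernels C] (Y : C) : Prop :=
  ∀ ⦃X Z : C⦄ (s : X ⟶ Z) (f : Z ⟶ X) (g : Z ⟶ Y) (t : Y ⟶ Z),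
    s ≫ f = 𝟙 X → t ≫ g = 𝟙 Y → t ≫ f = 0 →
    _root_.IsRegularEpi (kernel.ι g ≫ f)

attribute [local simp] prod.lift_fst prod.lift_snd prod.lift_fst_assoc prod.lift_snd_assoc pullback.lift_fst pullback.lift_snd pullback.lift_fst_assoc pullback.lift_snd_assoc

/-- Transfer a jointly strongly epimorphic pair along an isomorphism of the
target and a comparison morphism on the first leg. -/
theorem jse_transfer {X X' Y A A' : C} (r : X ⟶ A) (s : Y ⟶ A) (r' : X' ⟶ A')
    (s' : Y ⟶ A') (φ : A ⟶ A') [IsIso φ] (ψ : X' ⟶ X)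
    (hr : ψ ≫ r ≫ φ = r') (hs : s ≫ φ = s')
    (h : JointlyStronglyEpi r' s') : JointlyStronglyEpi r s := by
  rintro M m hm ⟨r₀, hr₀⟩ ⟨s₀, hs₀⟩
  have hm' : Mono (m ≫ φ) := mono_comp m φ
  have : IsIso (m ≫ φ) := by
    refine h (m ≫ φ) hm' ⟨ψ ≫ r₀, ?_⟩ ⟨s₀, ?_⟩
    · rw [← hr, ← hr₀]; simp
    · rw [← hs, ← hs₀]; simp
  exact IsIso.of_isIso_comp_right m φ

/-- In a pointed finitely complete category, every strongly unital object is a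
unital object. -/
theorem statement11 [HasFiniteLimits C] [HasZeroObject C] [HasZeroMorphisms C]
    (Y : C) (h : StronglyUnitalObject Y) : UnitalObject Y := by
  intro X g
  have H := h (0 : X ⟶ Y)
  let pf : Y ⨯ Y ⟶ Y := prod.fst
  let φ : pullback g pf ⟶ pullback (0 : X ⟶ Y) pf :=
    pullback.lift (pullback.fst g pf)
      (prod.lift 0 (pullback.snd g pf ≫ prod.snd)) (by simp [pf])
  let φinv : pullback (0 : X ⟶ Y) pf ⟶ pullback g pf :=
    pullback.lift (pullback.fst (0 : X ⟶ Y) pf)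
      (prod.lift (pullback.fst (0 : X ⟶ Y) pf ≫ g)
        (pullback.snd (0 : X ⟶ Y) pf ≫ prod.snd)) (by simp [pf])
  have hφ : φ ≫ φinv = 𝟙 (pullback g pf) := by
    apply pullback.hom_ext
    · simp [φ, φinv]
    · apply Limits.prod.hom_ext
      · simp only [Category.assoc, Category.id_comp]
        simp [φ, φinv, pf, pullback.condition]
      · simp [φ, φinv]
  have hφ' : φinv ≫ φ = 𝟙 (pullback (0 : X ⟶ Y) pf) := by
    apply pullback.hom_ext
    · simp [φ, φinv]
    · apply Limits.prod.hom_ext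
      · have h0 : pullback.snd (0 : X ⟶ Y) pf ≫ prod.fst = 0 := by
          have := (pullback.condition (f := (0 : X ⟶ Y)) (g := pf)).symm
          simpa [pf] using this
        simp [φ, φinv, h0]
      · simp [φ, φinv]
  have : IsIso φ := ⟨φinv, hφ, hφ'⟩
  have hs : (pullback.lift (𝟙 X) (g ≫ prod.lift (𝟙 Y) 0) (by simp [pf]) :
      X ⟶ pullback g pf) ≫ φ =
      pullback.lift (𝟙 X) ((0 : X ⟶ Y) ≫ prod.lift (𝟙 Y) (𝟙 Y)) (by simp [pf]) := by
    apply pullback.hom_ext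
    · simp [φ]
    · apply Limits.prod.hom_ext <;> simp [φ]
  intro W k
  have hψ : pullback.fst k (pullback.fst (0 : X ⟶ Y) pf) ≫ k =
      (pullback.snd k (pullback.fst (0 : X ⟶ Y) pf) ≫ φinv) ≫ pullback.fst g pf := by
    rw [pullback.condition]
    have : φinv ≫ pullback.fst g pf = pullback.fst (0 : X ⟶ Y) pf := by
      simp [φinv]
    rw [Category.assoc, this]
  refine jse_transfer _ _
    (pullback.snd k (pullback.fst (0 : X ⟶ Y) pf))
    (pullback.lift (𝟙 X) ((0 : X ⟶ Y) ≫ prod.lift (𝟙 Y) (𝟙 Y)) (by simp [pf]))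
    φ (pullback.lift (pullback.fst k (pullback.fst (0 : X ⟶ Y) pf))
        (pullback.snd k (pullback.fst (0 : X ⟶ Y) pf) ≫ φinv) hψ) ?_ hs (H k)
  rw [pullback.lift_snd_assoc, Category.assoc, hφ', Category.comp_id]
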